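/- For all n ≥ k ≥ 0, U(n,k) = Σ_{i=k}^{n} C(n,i) · (-r)^{n-i} · U_r(i,k), where U(n,k) = U_0(n,k). -/
import Mathlib


/-- `centralU r n k` is the r-central factorial number with even indices of the second kind. -/
def centralU (r : ℕ) : ℕ → ℕ → ℤ
  | 0, 0 => 1
  | 0, _ + 1 => 0
  | n + 1, 0 => (r : ℤ) ^ (n + 1)
  | n + 1, k + 1 => centralU r n k + (((k : ℤ) + 1) ^ 2 + r) * centralU r n (k + 1)

lemma centralU_zero_col (r n : ℕ) : centralU r n 0 = (r : ℤ) ^ n := by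
  cases n with
  | zero => simp [centralU]
  | succ n => rfl

lemma centralU_eq_zero (r : ℕ) : ∀ n k, n < k → centralU r n k = 0 := by
  intro n
  induction n with
  | zero =>
    intro k hk
    match k, hk with
    | k + 1, _ => rfl
  | succ n ih =>
    intro k hk
    match k, hk with
    | k + 1, hk =>
      show centralU r n k + (((k : ℤ) + 1) ^ 2 + r) * centralU r n (k + 1) = 0
      rw [ih k (by omega), ih (k + 1) (by omega)]
      ring

lemma sum_Icc_shift (k n : ℕ) (f : ℕ → ℤ) :
    ∑ i ∈ Finset.Icc (k + 1) (n + 1), f i = ∑ m ∈ Finset.Icc k n, f (m + 1) := by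
  rw [← Finset.map_add_right_Icc, Finset.sum_map]
  rfl

lemma centralU_key (r : ℕ) : ∀ n k, centralU 0 n k =
    ∑ i ∈ Finset.Icc k n, (n.choose i : ℤ) * (-(r : ℤ)) ^ (n - i) * centralU r i k := by
  intro n
  induction n with
  | zero =>
    intro k
    cases k with
    | zero => simp [centralU]
    | succ k =>
      rw [Finset.Icc_eq_empty (by omega)]
      simp [centralU]
  | succ n ih =>
    intro k
    cases k with
    | zero =>
      have h2 : Finset.Icc 0 (n + 1) = Finset.range (n + 2) := by
        ext x; simp [Nat.lt_succ_iff]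
      have h3 := add_pow (R := ℤ) (r : ℤ) (-(r : ℤ)) (n + 1)
      rw [h2]
      have h4 : ∀ i ∈ Finset.range (n + 2),
          ((n + 1).choose i : ℤ) * (-(r : ℤ)) ^ (n + 1 - i) * centralU r i 0
          = (r : ℤ) ^ i * (-(r : ℤ)) ^ (n + 1 - i) * ((n + 1).choose i : ℤ) := by
        intro i _; rw [centralU_zero_col]; ring
      rw [Finset.sum_congr rfl h4, ← h3]
      simp [centralU]
    | succ k =>
      by_cases hkn : k ≤ n
      · set c : ℤ := ((k : ℤ) + 1) ^ 2 + r with hc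
        rw [sum_Icc_shift]
        have hterm : ∀ m ∈ Finset.Icc k n,
            ((n + 1).choose (m + 1) : ℤ) * (-(r : ℤ)) ^ (n + 1 - (m + 1))
              * centralU r (m + 1) (k + 1)
            = (n.choose m : ℤ) * (-(r : ℤ)) ^ (n - m) * centralU r m k
              + c * ((n.choose m : ℤ) * (-(r : ℤ)) ^ (n - m) * centralU r m (k + 1))
              + (n.choose (m + 1) : ℤ) * (-(r : ℤ)) ^ (n - m)
                * (centralU r m k + c * centralU r m (k + 1)) := by
          intro m _
          have h1 : ((n + 1).choose (m + 1) : ℤ) = (n.choose m : ℤ) + (n.choose (m + 1) : ℤ) := by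
            rw [Nat.choose_succ_succ]; push_cast; ring
          have h2 : centralU r (m + 1) (k + 1)
              = centralU r m k + c * centralU r m (k + 1) := rfl
          have h3 : n + 1 - (m + 1) = n - m := Nat.succ_sub_succ n m
          rw [h3, h1, h2]
          ring
        rw [Finset.sum_congr rfl hterm, Finset.sum_add_distrib, Finset.sum_add_distrib,
          ← Finset.mul_sum]
        -- first sum
        have e1 : ∑ m ∈ Finset.Icc k n, (n.choose m : ℤ) * (-(r : ℤ)) ^ (n - m) * centralU r m k
            = centralU 0 n k := (ih k).symm
        -- second sum: drop the bottom term
        have e2 : ∑ m ∈ Finset.Icc k n,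
            (n.choose m : ℤ) * (-(r : ℤ)) ^ (n - m) * centralU r m (k + 1)
            = centralU 0 n (k + 1) := by
          rw [Finset.Icc_eq_cons_Ioc hkn, Finset.sum_cons, ← Finset.Icc_add_one_left_eq_Ioc,
            centralU_eq_zero r k (k + 1) (by omega)]
          rw [ih (k + 1)]
          ring
        -- third sum
        have e3 : ∑ m ∈ Finset.Icc k n,
            (n.choose (m + 1) : ℤ) * (-(r : ℤ)) ^ (n - m)
              * (centralU r m k + c * centralU r m (k + 1))
            = centralU 0 n (k + 1) * (-(r : ℤ)) := by
          have hsh : ∑ m ∈ Finset.Icc k n,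
              (n.choose (m + 1) : ℤ) * (-(r : ℤ)) ^ (n - m)
                * (centralU r m k + c * centralU r m (k + 1))
              = ∑ i ∈ Finset.Icc (k + 1) (n + 1),
                (n.choose i : ℤ) * (-(r : ℤ)) ^ (n + 1 - i) * centralU r i (k + 1) := by
            rw [sum_Icc_shift]
            refine Finset.sum_congr rfl fun m _ => ?_
            have h2 : centralU r (m + 1) (k + 1)
                = centralU r m k + c * centralU r m (k + 1) := rfl
            rw [Nat.succ_sub_succ, h2]
          rw [hsh, Finset.sum_Icc_succ_top (by omega)]
          have htop : ((n.choose (n + 1) : ℤ)) = 0 := by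
            rw [Nat.choose_eq_zero_of_lt (by omega)]; norm_num
          rw [htop]
          have hmul : ∀ i ∈ Finset.Icc (k + 1) n,
              (n.choose i : ℤ) * (-(r : ℤ)) ^ (n + 1 - i) * centralU r i (k + 1)
              = (n.choose i : ℤ) * (-(r : ℤ)) ^ (n - i) * centralU r i (k + 1) * (-(r : ℤ)) := by
            intro i hi
            rw [Finset.mem_Icc] at hi
            have : n + 1 - i = (n - i) + 1 := by omega
            rw [this, pow_succ]
            ring
          rw [Finset.sum_congr rfl hmul, ← Finset.sum_mul, ← ih (k + 1)]
          ring
        rw [e1, e2, e3]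
        show centralU 0 n k + (((k : ℤ) + 1) ^ 2 + (0 : ℕ)) * centralU 0 n (k + 1) = _
        push_cast
        rw [hc]
        push_cast
        ring
      · rw [Finset.Icc_eq_empty (by omega), centralU_eq_zero 0 (n + 1) (k + 1) (by omega)]
        simp

theorem centralU_zero_eq_sum_centralU (r n k : ℕ) (h : k ≤ n) :
    centralU 0 n k =
      ∑ i ∈ Finset.Icc k n, (n.choose i : ℤ) * (-(r : ℤ)) ^ (n - i) * centralU r i k := by
  exact centralU_key r n k
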